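/- arXiv:2603.05903 — 3 statements merged into one kernel-verified Lean document; each statement's English description precedes it below -/
import Mathlib

section
/- Let V(x) = ω₁(√(x₁²+x₂²) − A)² + ω₂x₃² on ℝ³ with ω₁, ω₂, A > 0. Then there exist constants C > 0 and β₀ > 0 such that for all 0 < β < β₀, ∫_{ℝ³} ((β − V(x))₊)^{5/2} dx ≤ C β^{7/2}, where (·)₊ denotes the positive part. -/
open MeasureTheory

/-- Volume of the annulus `A - δ ≤ ‖y‖ ≤ A + δ` in the Euclidean plane. -/
lemma stmt0_ann_vol (A δ : ℝ) (hδ : 0 ≤ δ) (hδA : δ ≤ A) :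
    volume {y : EuclideanSpace ℝ (Fin 2) | A - δ ≤ ‖y‖ ∧ ‖y‖ ≤ A + δ}
      ≤ ENNReal.ofReal (Real.pi * (4 * A * δ)) := by
  have hsub : {y : EuclideanSpace ℝ (Fin 2) | A - δ ≤ ‖y‖ ∧ ‖y‖ ≤ A + δ}
      ⊆ Metric.closedBall 0 (A + δ) \ Metric.ball 0 (A - δ) := by
    intro y ⟨h1, h2⟩
    constructor
    · simpa [Metric.mem_closedBall, dist_zero_right] using h2
    · simp only [Metric.mem_ball, dist_zero_right, not_lt]
      exact h1
  refine (measure_mono hsub).trans ?_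
  have hball : ∀ r : ℝ, 0 ≤ r →
      volume (Metric.ball (0 : EuclideanSpace ℝ (Fin 2)) r) = ENNReal.ofReal (r ^ 2 * Real.pi) := by
    intro r hr
    rw [EuclideanSpace.volume_ball, Fintype.card_fin]
    rw [show ((2 : ℕ) : ℝ) / 2 + 1 = 2 by norm_num, Real.Gamma_two]
    rw [← ENNReal.ofReal_pow hr, ← ENNReal.ofReal_mul (by positivity)]
    congr 1
    rw [Real.sq_sqrt Real.pi_nonneg]
    ring
  have hcball : volume (Metric.closedBall (0 : EuclideanSpace ℝ (Fin 2)) (A + δ))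
      = ENNReal.ofReal ((A + δ) ^ 2 * Real.pi) := by
    rw [MeasureTheory.Measure.addHaar_closedBall_eq_addHaar_ball]
    exact hball _ (by linarith)
  rw [measure_diff ((Metric.ball_subset_closedBall).trans
        (Metric.closedBall_subset_closedBall (by linarith)))
      measurableSet_ball.nullMeasurableSet measure_ball_lt_top.ne,
    hcball, hball _ (by linarith), ← ENNReal.ofReal_sub _ (by positivity)]
  apply ENNReal.ofReal_le_ofReal
  nlinarith [Real.pi_nonneg]

set_option maxHeartbeats 1000000 in
/-- For the ring-shaped potential
`V x = ω₁ (√(x₁²+x₂²) − A)² + ω₂ x₃²` with `ω₁, ω₂, A > 0`, there exist `C > 0` and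
`β₀ > 0` such that for all `0 < β < β₀`,
`∫ ((β − V x)₊)^(5/2) dx ≤ C β^(7/2)`. -/
theorem stmt0 (ω₁ ω₂ A : ℝ) (hω₁ : 0 < ω₁) (hω₂ : 0 < ω₂) (hA : 0 < A)
    (V : (Fin 3 → ℝ) → ℝ)
    (hV : ∀ x : Fin 3 → ℝ,
      V x = ω₁ * (Real.sqrt ((x 0) ^ 2 + (x 1) ^ 2) - A) ^ 2 + ω₂ * (x 2) ^ 2) :
    ∃ C > (0 : ℝ), ∃ β₀ > (0 : ℝ), ∀ β : ℝ, 0 < β → β < β₀ →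
      ∫ x : Fin 3 → ℝ, (max (β - V x) 0) ^ ((5 : ℝ) / 2)
        ≤ C * β ^ ((7 : ℝ) / 2) := by
  refine ⟨8 * Real.pi * A / Real.sqrt (ω₁ * ω₂), by positivity, ω₁ * A ^ 2, by positivity, ?_⟩
  intro β hβ hβ'
  set δ : ℝ := Real.sqrt (β / ω₁) with hδdef
  set δ₂ : ℝ := Real.sqrt (β / ω₂) with hδ₂def
  have hδpos : 0 < δ := Real.sqrt_pos.mpr (by positivity)
  have hδ₂pos : 0 < δ₂ := Real.sqrt_pos.mpr (by positivity)
  have hδsq : δ ^ 2 = β / ω₁ := Real.sq_sqrt (by positivity)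
  have hδ₂sq : δ₂ ^ 2 = β / ω₂ := Real.sq_sqrt (by positivity)
  have hδA : δ ≤ A := by
    rw [hδdef]
    calc Real.sqrt (β / ω₁) ≤ Real.sqrt (A ^ 2) :=
          Real.sqrt_le_sqrt (by rw [div_le_iff₀ hω₁]; nlinarith)
      _ = A := Real.sqrt_sq hA.le
  -- the exceptional set
  set e := MeasurableEquiv.piFinSuccAbove (fun _ : Fin 3 => ℝ) 2 with he
  set Ann : Set (Fin 2 → ℝ) :=
    {p | A - δ ≤ Real.sqrt ((p 0) ^ 2 + (p 1) ^ 2) ∧ Real.sqrt ((p 0) ^ 2 + (p 1) ^ 2) ≤ A + δ}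
    with hAnndef
  set T : Set (ℝ × (Fin 2 → ℝ)) := Set.Icc (-δ₂) δ₂ ×ˢ Ann with hTdef
  set S : Set (Fin 3 → ℝ) := e ⁻¹' T with hSdef
  have hAnn_m : MeasurableSet Ann := by
    have : Ann = (fun p : Fin 2 → ℝ => Real.sqrt ((p 0) ^ 2 + (p 1) ^ 2)) ⁻¹'
        (Set.Icc (A - δ) (A + δ)) := rfl
    rw [this]
    exact measurableSet_Icc.preimage (by fun_prop)
  have hT_m : MeasurableSet T := measurableSet_Icc.prod hAnn_m
  have hS_m : MeasurableSet S := hT_m.preimage e.measurable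
  have hmemS : ∀ x : Fin 3 → ℝ, x ∈ S ↔
      (x 2 ∈ Set.Icc (-δ₂) δ₂ ∧ (A - δ ≤ Real.sqrt ((x 0) ^ 2 + (x 1) ^ 2)
        ∧ Real.sqrt ((x 0) ^ 2 + (x 1) ^ 2) ≤ A + δ)) := by
    intro x
    have hex : e x = (x 2, fun j => x (Fin.succAbove 2 j)) := rfl
    have h0 : (Fin.succAbove 2 0 : Fin 3) = 0 := by decide
    have h1 : (Fin.succAbove 2 1 : Fin 3) = 1 := by decide
    simp only [hSdef, Set.mem_preimage, hex, hTdef, Set.mem_prod, hAnndef, Set.mem_setOf_eq,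
      h0, h1]
  -- pointwise bound
  have hpt : ∀ x : Fin 3 → ℝ, (max (β - V x) 0) ^ ((5 : ℝ) / 2)
      ≤ S.indicator (fun _ => β ^ ((5 : ℝ) / 2)) x := by
    intro x
    have hVx := hV x
    set r : ℝ := Real.sqrt ((x 0) ^ 2 + (x 1) ^ 2) with hrdef
    by_cases hx : x ∈ S
    · rw [Set.indicator_of_mem hx]
      apply Real.rpow_le_rpow (le_max_right _ _) _ (by norm_num)
      have hVnn : 0 ≤ V x := by rw [hVx]; positivity
      apply max_le (by linarith) hβ.le
    · rw [Set.indicator_of_notMem hx]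
      have hβV : β - V x ≤ 0 := by
        rw [hmemS x] at hx
        push_neg at hx
        by_contra hcon
        push_neg at hcon
        have hVβ : V x < β := by linarith
        have hβeq1 : ω₁ * δ ^ 2 = β := by rw [hδsq, mul_div_cancel₀ _ hω₁.ne']
        have hβeq2 : ω₂ * δ₂ ^ 2 = β := by rw [hδ₂sq, mul_div_cancel₀ _ hω₂.ne']
        have h1 : ω₁ * (r - A) ^ 2 < β := by
          nlinarith [mul_nonneg hω₂.le (sq_nonneg (x 2))]
        have h2 : ω₂ * (x 2) ^ 2 < β := by
          nlinarith [mul_nonneg hω₁.le (sq_nonneg (r - A))]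
        have habs2 : (x 2) ^ 2 ≤ δ₂ ^ 2 := by nlinarith [hβeq2]
        have habs1 : (r - A) ^ 2 ≤ δ ^ 2 := by nlinarith [hβeq1]
        have hx2 : x 2 ∈ Set.Icc (-δ₂) δ₂ := by
          constructor
          · nlinarith [habs2, sq_nonneg (x 2 + δ₂), hδ₂pos]
          · nlinarith [habs2, sq_nonneg (x 2 - δ₂), hδ₂pos]
        have hr1 : A - δ ≤ r := by nlinarith [habs1, sq_nonneg (r - A + δ), hδpos]
        have hr2 : r ≤ A + δ := by nlinarith [habs1, sq_nonneg (r - A - δ), hδpos]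
        exact absurd (hx hx2 hr1) (not_lt.mpr hr2)
      rw [max_eq_right hβV, Real.zero_rpow (by norm_num)]
  -- volume of S
  have hvolAnn : volume Ann ≤ ENNReal.ofReal (Real.pi * (4 * A * δ)) := by
    have hF := EuclideanSpace.volume_preserving_symm_measurableEquiv_toLp (ι := Fin 2)
    have heq : volume Ann = volume ((MeasurableEquiv.toLp 2 (Fin 2 → ℝ)).symm ⁻¹' Ann) :=
      (hF.measure_preimage hAnn_m.nullMeasurableSet).symm
    rw [heq]
    have hpre : (MeasurableEquiv.toLp 2 (Fin 2 → ℝ)).symm ⁻¹' Ann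
        = {y : EuclideanSpace ℝ (Fin 2) | A - δ ≤ ‖y‖ ∧ ‖y‖ ≤ A + δ} := by
      ext y
      have hnorm : Real.sqrt ((y 0) ^ 2 + (y 1) ^ 2) = ‖y‖ := by
        rw [EuclideanSpace.norm_eq]
        simp [Fin.sum_univ_two, sq_abs]
      simp only [Set.mem_preimage, hAnndef, Set.mem_setOf_eq]
      constructor
      · rintro ⟨h1, h2⟩; exact ⟨hnorm ▸ h1, hnorm ▸ h2⟩
      · rintro ⟨h1, h2⟩; exact ⟨hnorm ▸ h1, hnorm ▸ h2⟩
    rw [hpre]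
    exact stmt0_ann_vol A δ hδpos.le hδA
  have hvolS : volume S ≤ ENNReal.ofReal (8 * Real.pi * A * (δ * δ₂)) := by
    have hmp := measurePreserving_piFinSuccAbove (fun _ : Fin 3 => (volume : Measure ℝ)) 2
    have h1 : volume S = ((volume : Measure ℝ).prod (Measure.pi fun _ : Fin 2 => volume)) T := by
      rw [hSdef, volume_pi]
      exact hmp.measure_preimage hT_m.nullMeasurableSet
    rw [h1, hTdef, Measure.prod_prod, Real.volume_Icc, ← volume_pi]
    calc ENNReal.ofReal (δ₂ - -δ₂) * volume Ann
        ≤ ENNReal.ofReal (δ₂ - -δ₂) * ENNReal.ofReal (Real.pi * (4 * A * δ)) :=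
          mul_le_mul_right hvolAnn _
      _ = ENNReal.ofReal (8 * Real.pi * A * (δ * δ₂)) := by
          rw [← ENNReal.ofReal_mul (by linarith)]
          congr 1
          ring
  have hδδ : δ * δ₂ = β / Real.sqrt (ω₁ * ω₂) := by
    rw [hδdef, hδ₂def, ← Real.sqrt_mul (by positivity : (0:ℝ) ≤ β / ω₁), div_mul_div_comm,
      Real.sqrt_div (by positivity : (0:ℝ) ≤ β * β), Real.sqrt_mul_self hβ.le]
  have hSfin : volume S < ⊤ := hvolS.trans_lt ENNReal.ofReal_lt_top
  have hgOn : IntegrableOn (fun _ : Fin 3 → ℝ => β ^ ((5 : ℝ) / 2)) S :=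
    integrableOn_const hSfin.ne
  have hg : Integrable (S.indicator fun _ : Fin 3 → ℝ => β ^ ((5 : ℝ) / 2)) :=
    hgOn.integrable_indicator hS_m
  calc ∫ x : Fin 3 → ℝ, (max (β - V x) 0) ^ ((5 : ℝ) / 2)
      ≤ ∫ x : Fin 3 → ℝ, S.indicator (fun _ => β ^ ((5 : ℝ) / 2)) x :=
        integral_mono_of_nonneg (Filter.Eventually.of_forall fun x => by positivity) hg
          (Filter.Eventually.of_forall hpt)
    _ = (volume S).toReal • β ^ ((5 : ℝ) / 2) := integral_indicator_const _ hS_m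
    _ ≤ (8 * Real.pi * A * (β / Real.sqrt (ω₁ * ω₂))) * β ^ ((5 : ℝ) / 2) := by
        rw [smul_eq_mul]
        apply mul_le_mul_of_nonneg_right _ (by positivity)
        apply ENNReal.toReal_le_of_le_ofReal (by positivity)
        rw [← hδδ]
        exact hvolS
    _ = 8 * Real.pi * A / Real.sqrt (ω₁ * ω₂) * β ^ ((7 : ℝ) / 2) := by
        rw [show (7 : ℝ) / 2 = 1 + 5 / 2 by norm_num, Real.rpow_add hβ, Real.rpow_one]
        ring
end

section
/- Suppose real-valued functions I : (0, a*) → ℝ and J : (0, a*) → ℝ satisfy: (i) for all 0 < b < a < a*, I(b) ≤ I(a) + (a − b)·J(a); (ii) there are constants C₃, C₄ > 0 with C₃(a* − a)^{3/5} ≤ I(a) ≤ C₄(a* − a)^{1/2} for a near a*. Then there exists K > 0 such that J(a) ≥ K(a* − a)^{−1/3} for all a sufficiently close to a* from below. -/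
/-- If `I(b) ≤ I(a) + (a−b)·J(a)` for all `0 < b < a < a*`, and
`C₃(a*−a)^(3/5) ≤ I(a) ≤ C₄(a*−a)^(1/2)` near `a*`, then there is `K > 0` with
`J(a) ≥ K (a*−a)^(−1/3)` for `a` close to `a*` from below. -/
theorem stmt2 (aStar : ℝ) (haStar : 0 < aStar) (I J : ℝ → ℝ)
    (hcomp : ∀ a b : ℝ, 0 < b → b < a → a < aStar → I b ≤ I a + (a - b) * J a)
    (C₃ C₄ : ℝ) (hC₃ : 0 < C₃) (hC₄ : 0 < C₄)
    (δ₀ : ℝ) (hδ₀ : 0 < δ₀)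
    (hbounds : ∀ a : ℝ, aStar - δ₀ < a → a < aStar →
      C₃ * (aStar - a) ^ ((3 : ℝ) / 5) ≤ I a ∧ I a ≤ C₄ * (aStar - a) ^ ((1 : ℝ) / 2)) :
    ∃ K > (0 : ℝ), ∃ δ > (0 : ℝ), ∀ a : ℝ, aStar - δ < a → a < aStar →
      K * (aStar - a) ^ (-(1 : ℝ) / 3) ≤ J a := by
  set m : ℝ := min δ₀ aStar with hmdef
  have hm : 0 < m := lt_min hδ₀ haStar
  have hbase : 0 < (C₄ + C₃) / C₃ := div_pos (by linarith) hC₃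
  set C₀ : ℝ := ((C₄ + C₃) / C₃) ^ ((5 : ℝ) / 3) with hC₀def
  have hC₀ : 0 < C₀ := Real.rpow_pos_of_pos hbase _
  have hC₀pow : C₀ ^ ((3 : ℝ) / 5) = (C₄ + C₃) / C₃ := by
    rw [hC₀def, ← Real.rpow_mul hbase.le]
    norm_num
  set δ : ℝ := min (m / 2) ((m / (2 * C₀)) ^ ((6 : ℝ) / 5)) with hδdef
  have hδ : 0 < δ :=
    lt_min (by linarith) (Real.rpow_pos_of_pos (div_pos hm (by linarith)) _)
  refine ⟨C₃ / C₀, div_pos hC₃ hC₀, δ, hδ, fun a ha1 ha2 => ?_⟩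
  set ε : ℝ := aStar - a with hεdef
  have hε : 0 < ε := by simp [hεdef]; linarith
  have hεδ : ε < δ := by simp [hεdef]; linarith
  set t : ℝ := C₀ * ε ^ ((5 : ℝ) / 6) with htdef
  have ht : 0 < t := mul_pos hC₀ (Real.rpow_pos_of_pos hε _)
  -- t < m / 2
  have ht2 : t < m / 2 := by
    have h1 : ε ^ ((5 : ℝ) / 6) < ((m / (2 * C₀)) ^ ((6 : ℝ) / 5)) ^ ((5 : ℝ) / 6) := by
      apply Real.rpow_lt_rpow hε.le (lt_of_lt_of_le hεδ (min_le_right _ _)) (by norm_num)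
    have h2 : ((m / (2 * C₀)) ^ ((6 : ℝ) / 5)) ^ ((5 : ℝ) / 6) = m / (2 * C₀) := by
      rw [← Real.rpow_mul (div_pos hm (by linarith)).le]
      norm_num
    rw [h2] at h1
    calc t < C₀ * (m / (2 * C₀)) := by
            exact mul_lt_mul_of_pos_left h1 hC₀
      _ = m / 2 := by field_simp
  have hεm : ε < m / 2 := lt_of_lt_of_le hεδ (min_le_left _ _)
  have hmδ₀ : m ≤ δ₀ := min_le_left _ _
  have hma : m ≤ aStar := min_le_right _ _
  set b : ℝ := a - t with hbdef
  have hb0 : 0 < b := by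
    have : aStar - δ ≤ a := ha1.le
    have hδm : δ ≤ m / 2 := min_le_left _ _
    simp only [hbdef]; linarith
  have hba : b < a := by simp only [hbdef]; linarith
  have hbStar : b < aStar := lt_trans hba ha2
  have hbδ₀ : aStar - δ₀ < b := by
    have : aStar - b = ε + t := by simp [hbdef, hεdef]; ring
    linarith
  have hIb := (hbounds b hbδ₀ hbStar).1
  have hIa := (hbounds a (by linarith [min_le_left δ₀ aStar,
    (min_le_left (m/2) ((m / (2 * C₀)) ^ ((6:ℝ)/5)) : δ ≤ m/2)]) ha2).2
  have hcab := hcomp a b hb0 hba ha2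
  have hab : a - b = t := by simp [hbdef]
  rw [hab] at hcab
  -- aStar - b = ε + t
  have hsb : aStar - b = ε + t := by simp [hbdef, hεdef]; ring
  rw [hsb] at hIb
  -- t^{3/5} = C₀^{3/5} ε^{1/2}
  have htpow : t ^ ((3 : ℝ) / 5) = ((C₄ + C₃) / C₃) * ε ^ ((1 : ℝ) / 2) := by
    rw [htdef, Real.mul_rpow hC₀.le (Real.rpow_pos_of_pos hε _).le, hC₀pow,
      ← Real.rpow_mul hε.le]
    norm_num
  have hmono : C₃ * t ^ ((3 : ℝ) / 5) ≤ C₃ * (ε + t) ^ ((3 : ℝ) / 5) := by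
    apply mul_le_mul_of_nonneg_left _ hC₃.le
    exact Real.rpow_le_rpow ht.le (by linarith) (by norm_num)
  have hIa' : I a ≤ C₄ * ε ^ ((1 : ℝ) / 2) := by rw [hεdef]; exact hIa
  have key : C₃ * ε ^ ((1 : ℝ) / 2) ≤ t * J a := by
    have h3 : C₃ * t ^ ((3 : ℝ) / 5) = (C₄ + C₃) * ε ^ ((1 : ℝ) / 2) := by
      rw [htpow]; field_simp
    linarith [hmono, hIb, hcab, hIa', h3]
  -- conclude
  have hfin : C₃ / C₀ * ε ^ (-(1 : ℝ) / 3) * t = C₃ * ε ^ ((1 : ℝ) / 2) := by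
    rw [htdef]
    rw [show C₃ / C₀ * ε ^ (-(1 : ℝ) / 3) * (C₀ * ε ^ ((5 : ℝ) / 6))
        = (C₃ / C₀ * C₀) * (ε ^ (-(1 : ℝ) / 3) * ε ^ ((5 : ℝ) / 6)) by ring,
      ← Real.rpow_add hε, div_mul_cancel₀ _ hC₀.ne']
    norm_num
  have heq : C₃ / C₀ * ε ^ (-(1 : ℝ) / 3) = C₃ * ε ^ ((1 : ℝ) / 2) / t := by
    rw [eq_div_iff ht.ne', hfin]
  rw [heq, div_le_iff₀ ht]
  linarith [key]
end

section
/- Suppose w : ℝ³ → ℝ is a C² function satisfying −Δw ≤ (μ/2) w on ℝ³ \ B_M(0) for some μ < 0 and M > 0, with w ≥ 0, w bounded, and w(x) → 0 as |x| → ∞. Then there exists C > 0 such that w(x) ≤ C e^{−√(|μ|/2) |x|} for all x ∈ ℝ³. -/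
open Filter


lemma second_test {g g' : ℝ → ℝ} {a : ℝ}
    (hmax : IsLocalMax g 0)
    (hg' : ∀ᶠ t in nhds (0:ℝ), HasDerivAt g (g' t) t)
    (hg'' : HasDerivAt g' a 0) : a ≤ 0 := by
  by_contra hpos
  push_neg at hpos
  have h0 : g' 0 = 0 := hmax.hasDerivAt_eq_zero hg'.self_of_nhds
  -- slope of g' tends to a > 0
  have hslope : Tendsto (fun t => g' t / t) (nhdsWithin 0 {(0:ℝ)}ᶜ) (nhds a) := by
    have := hasDerivAt_iff_tendsto_slope.mp hg''
    have he : (fun t => g' t / t) = slope g' 0 := by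
      funext t; simp [slope_def_field, h0]
    rw [he]; exact this
  have hev : ∀ᶠ t in nhdsWithin 0 {(0:ℝ)}ᶜ, 0 < g' t / t :=
    hslope.eventually (eventually_gt_nhds hpos)
  have hle : nhdsWithin (0:ℝ) (Set.Ioi 0) ≤ nhdsWithin (0:ℝ) {(0:ℝ)}ᶜ :=
    nhdsWithin_mono 0 (fun t ht => ne_of_gt ht)
  have hev2 : ∀ᶠ t in nhdsWithin (0:ℝ) (Set.Ioi 0), 0 < g' t := by
    filter_upwards [hev.filter_mono hle, eventually_mem_nhdsWithin] with t h ht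
    have ht0 : (0:ℝ) < t := ht
    have := mul_pos h ht0
    rwa [div_mul_cancel₀ _ (ne_of_gt ht0)] at this
  -- extract radii
  obtain ⟨u, hu, huI⟩ := mem_nhdsGT_iff_exists_Ioo_subset.mp hev2
  have hu0 : 0 < u := by
    rcases (Set.mem_Ioi.mp hu) with h; exact h
  obtain ⟨ε, hε, hball⟩ := Metric.eventually_nhds_iff.mp (hg'.and hmax)
  set δ := min (u/2) (ε/2) with hδdef
  have hδ0 : 0 < δ := lt_min (by linarith) (by linarith)
  have hδu : δ < u := lt_of_le_of_lt (min_le_left _ _) (by linarith)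
  have hδε : δ < ε := lt_of_le_of_lt (min_le_right _ _) (by linarith)
  -- g strictly mono on [0, δ]
  have hmono : StrictMonoOn g (Set.Icc 0 δ) := by
    apply strictMonoOn_of_deriv_pos (convex_Icc 0 δ)
    · intro t ht
      have h1 : dist t (0:ℝ) < ε := by
        rw [Real.dist_eq, sub_zero, abs_of_nonneg ht.1]; linarith [ht.2]
      exact ((hball h1).1.continuousAt).continuousWithinAt
    · intro t ht
      rw [interior_Icc] at ht
      have h1 : dist t (0:ℝ) < ε := by
        rw [Real.dist_eq, sub_zero, abs_of_nonneg (le_of_lt ht.1)]; linarith [ht.2]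
      rw [(hball h1).1.deriv]
      exact huI ⟨ht.1, lt_trans ht.2 hδu⟩
  have hlt : g 0 < g δ := hmono ⟨le_refl 0, le_of_lt hδ0⟩ ⟨le_of_lt hδ0, le_refl δ⟩ hδ0
  have : g δ ≤ g 0 := by
    have h1 : dist δ (0:ℝ) < ε := by rw [Real.dist_eq, sub_zero, abs_of_pos hδ0]; exact hδε
    exact (hball h1).2
  linarith

section Bridge
variable {E : Type*} [NormedAddCommGroup E] [NormedSpace ℝ E]

lemma line_hasDerivAt (f : E → ℝ) (hf : ContDiff ℝ 2 f) (x m : E) (t : ℝ) :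
    HasDerivAt (fun s => f (x + s • m)) (fderiv ℝ f (x + t • m) m) t := by
  have hL : HasDerivAt (fun s : ℝ => x + s • m) m t := by
    simpa using ((hasDerivAt_id t).smul_const m).const_add x
  have hfd : HasFDerivAt f (fderiv ℝ f (x + t • m)) (x + t • m) :=
    (hf.differentiable (by norm_num)).differentiableAt.hasFDerivAt
  exact hfd.comp_hasDerivAt t hL

lemma line_hasDerivAt2 (f : E → ℝ) (hf : ContDiff ℝ 2 f) (x m : E) :
    HasDerivAt (fun t : ℝ => fderiv ℝ f (x + t • m) m)
      (iteratedFDeriv ℝ 2 f x ![m, m]) 0 := by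
  have hf' : ContDiff ℝ 1 (fderiv ℝ f) := hf.fderiv_right (by norm_num)
  have hL : HasDerivAt (fun s : ℝ => x + s • m) m 0 := by
    simpa using ((hasDerivAt_id (0:ℝ)).smul_const m).const_add x
  have h1 : HasFDerivAt (fderiv ℝ f) (fderiv ℝ (fderiv ℝ f) x) x :=
    (hf'.differentiable (by norm_num)).differentiableAt.hasFDerivAt
  have h2 : HasDerivAt (fun t : ℝ => fderiv ℝ f (x + t • m))
      (fderiv ℝ (fderiv ℝ f) x m) 0 := by
    have := h1.comp_hasDerivAt_of_eq 0 hL (by simp)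
    exact this
  have h3 : HasDerivAt (fun t : ℝ => (ContinuousLinearMap.apply ℝ ℝ m) (fderiv ℝ f (x + t • m)))
      ((ContinuousLinearMap.apply ℝ ℝ m) (fderiv ℝ (fderiv ℝ f) x m)) 0 :=
    ((ContinuousLinearMap.apply ℝ ℝ m).hasFDerivAt).comp_hasDerivAt 0 h2
  have : iteratedFDeriv ℝ 2 f x ![m, m] = fderiv ℝ (fderiv ℝ f) x m m := by
    rw [iteratedFDeriv_two_apply]; simp
  rw [this]
  simpa using h3

end Bridge

section Phi
open Real

lemma q_pos {r b t : ℝ} (hr : 0 < r) (hb : b^2 ≤ r^2) (ht : |t| < r) :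
    0 < r^2 + 2*b*t + t^2 := by
  have hb' : |b| ≤ r := by nlinarith [abs_nonneg b, sq_abs b]
  have key : -(r*|t|) ≤ b*t := by
    have h1 : |b*t| ≤ r * |t| := by
      rw [abs_mul]; exact mul_le_mul_of_nonneg_right hb' (abs_nonneg t)
    have := neg_abs_le (b*t)
    linarith
  have h2 : 0 < (r - |t|)^2 := pow_pos (sub_pos.mpr ht) 2
  nlinarith [sq_abs t]

lemma phi_hasDerivAt (C k r b t : ℝ) (hq : 0 < r^2 + 2*b*t + t^2) :
    HasDerivAt (fun t => C * Real.exp (-k * Real.sqrt (r^2 + 2*b*t + t^2)))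
      ((C * Real.exp (-k * Real.sqrt (r^2 + 2*b*t + t^2))) *
        (-k * ((b + t) / Real.sqrt (r^2 + 2*b*t + t^2)))) t := by
  have hq' : HasDerivAt (fun t : ℝ => r^2 + 2*b*t + t^2) (2*b + 2*t) t := by
    have := (((hasDerivAt_id t).const_mul (2*b)).const_add (r^2)).add (hasDerivAt_pow 2 t)
    exact this.congr_deriv (by norm_num)
  have hs := hq'.sqrt (ne_of_gt hq)
  have hin := hs.const_mul (-k)
  have hexp := hin.exp.const_mul C
  refine hexp.congr_deriv ?_
  have hsne : Real.sqrt (r^2 + 2*b*t + t^2) ≠ 0 := by positivity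
  field_simp

lemma phi_hasDerivAt2 (C k r b : ℝ) (hr : 0 < r) (hb : b^2 ≤ r^2) :
    HasDerivAt (fun t => (C * Real.exp (-k * Real.sqrt (r^2 + 2*b*t + t^2))) *
        (-k * ((b + t) / Real.sqrt (r^2 + 2*b*t + t^2))))
      (C * Real.exp (-k*r) * (k^2*b^2/r^2 - k*(r^2-b^2)/r^3)) 0 := by
  have hq0 : (0:ℝ) < r^2 + 2*b*0 + 0^2 := by nlinarith
  have hq' : HasDerivAt (fun t : ℝ => r^2 + 2*b*t + t^2) (2*b + 2*0) 0 := by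
    have := (((hasDerivAt_id (0:ℝ)).const_mul (2*b)).const_add (r^2)).add
      (hasDerivAt_pow 2 (0:ℝ))
    exact this.congr_deriv (by norm_num)
  have hs := hq'.sqrt (ne_of_gt hq0)
  have hs0 : Real.sqrt (r^2 + 2*b*0 + 0^2) = r := by
    rw [show r^2 + 2*b*0 + 0^2 = r^2 by ring, Real.sqrt_sq hr.le]
  have hu := (hs.const_mul (-k)).exp.const_mul C
  have hnum : HasDerivAt (fun t : ℝ => b + t) 1 0 := by
    simpa using (hasDerivAt_id (0:ℝ)).const_add b
  have hv := (hnum.div hs (by rw [hs0]; exact ne_of_gt hr)).const_mul (-k)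
  have := hu.mul hv
  refine this.congr_deriv ?_
  simp only [Pi.div_apply]
  rw [hs0]
  have hrne : r ≠ 0 := ne_of_gt hr
  field_simp
  ring

end Phi

lemma sum3 (E k r b0 b1 b2 : ℝ) (hr : r ≠ 0) (hS : b0^2+b1^2+b2^2 = r^2) :
    E*(k^2*b0^2/r^2 - k*(r^2-b0^2)/r^3) + E*(k^2*b1^2/r^2 - k*(r^2-b1^2)/r^3)
      + E*(k^2*b2^2/r^2 - k*(r^2-b2^2)/r^3) = E*(k^2 - 2*k/r) := by
  have h1 : E*(k^2*b0^2/r^2 - k*(r^2-b0^2)/r^3) + E*(k^2*b1^2/r^2 - k*(r^2-b1^2)/r^3)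
      + E*(k^2*b2^2/r^2 - k*(r^2-b2^2)/r^3)
      = E*(k^2*(b0^2+b1^2+b2^2)/r^2 - k*(3*r^2-(b0^2+b1^2+b2^2))/r^3) := by
    ring
  rw [h1, hS]
  field_simp
  ring

/-- The Laplacian of a scalar function on `ℝ³`, as the trace of the second
derivative. -/
noncomputable def laplacian (f : EuclideanSpace ℝ (Fin 3) → ℝ)
    (x : EuclideanSpace ℝ (Fin 3)) : ℝ :=
  ∑ i : Fin 3,
    iteratedFDeriv ℝ 2 f x ![EuclideanSpace.single i 1, EuclideanSpace.single i 1]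

/-- If `w ≥ 0` is a bounded `C²` function on `ℝ³` vanishing at infinity
and satisfying `−Δw ≤ (μ/2) w` outside `B_M(0)` with `μ < 0`, then
`w(x) ≤ C e^{−√(|μ|/2)|x|}` for some `C > 0`. -/
theorem stmt8 (w : EuclideanSpace ℝ (Fin 3) → ℝ) (hw : ContDiff ℝ 2 w)
    (μ M : ℝ) (hμ : μ < 0) (hM : 0 < M)
    (hineq : ∀ x, M ≤ ‖x‖ → -laplacian w x ≤ (μ / 2) * w x)
    (hnonneg : ∀ x, 0 ≤ w x)
    (hbdd : ∃ B : ℝ, ∀ x, w x ≤ B)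
    (hdecay : Tendsto w (cocompact (EuclideanSpace ℝ (Fin 3))) (nhds 0)) :
    ∃ C > (0 : ℝ), ∀ x, w x ≤ C * Real.exp (-Real.sqrt (|μ| / 2) * ‖x‖) := by
  obtain ⟨B, hB⟩ := hbdd
  have hB0 : 0 ≤ B := le_trans (hnonneg 0) (hB 0)
  set k := Real.sqrt (|μ|/2) with hkdef
  have hμ2 : 0 < |μ|/2 := by
    have : 0 < |μ| := abs_pos.mpr (ne_of_lt hμ)
    linarith
  have hk0 : 0 < k := Real.sqrt_pos.mpr hμ2
  have hk2 : k^2 = -μ/2 := by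
    rw [hkdef, Real.sq_sqrt hμ2.le, abs_of_neg hμ]
  set C := (B+1) * Real.exp (k*M) with hCdef
  have hC0 : 0 < C := by positivity
  refine ⟨C, hC0, ?_⟩
  have hball : ∀ x : EuclideanSpace ℝ (Fin 3), ‖x‖ ≤ M →
      w x ≤ C * Real.exp (-k * ‖x‖) := by
    intro x hx
    have h1 : Real.exp (-(k*M)) ≤ Real.exp (-k * ‖x‖) := by
      apply Real.exp_le_exp.mpr
      have := norm_nonneg x
      nlinarith
    calc w x ≤ B := hB x
    _ ≤ B + 1 := by linarith
    _ = (B+1) * Real.exp (k*M) * Real.exp (-(k*M)) := by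
        rw [mul_assoc, ← Real.exp_add]; simp
    _ ≤ C * Real.exp (-k * ‖x‖) := by
        rw [hCdef]
        exact mul_le_mul_of_nonneg_left h1 (by positivity)
  by_contra hcon
  push_neg at hcon
  obtain ⟨z, hz⟩ := hcon
  set v : EuclideanSpace ℝ (Fin 3) → ℝ := fun x => w x - C * Real.exp (-k * ‖x‖)
    with hvdef
  have hvcont : Continuous v := by
    apply hw.continuous.sub
    exact continuous_const.mul (Real.continuous_exp.comp (continuous_const.mul continuous_norm))
  have hvz : 0 < v z := by simp only [hvdef]; linarith
  have hφ0 : Tendsto (fun x : EuclideanSpace ℝ (Fin 3) => C * Real.exp (-k * ‖x‖))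
      (cocompact _) (nhds 0) := by
    have h1 : Tendsto (fun x : EuclideanSpace ℝ (Fin 3) => ‖x‖) (cocompact _) atTop :=
      tendsto_norm_cocompact_atTop
    have h2 : Tendsto (fun s : ℝ => C * Real.exp (-k * s)) atTop (nhds 0) := by
      have h3 : Tendsto (fun s : ℝ => -k * s) atTop atBot := by
        simpa using tendsto_id.const_mul_atTop_of_neg (show -k < 0 by linarith)
      have h4 := (Real.tendsto_exp_atBot.comp h3).const_mul C
      simpa using h4
    exact h2.comp h1
  have hv0 : Tendsto v (cocompact _) (nhds 0) := by
    have := hdecay.sub hφ0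
    rw [sub_zero] at this
    exact this
  have hev : ∀ᶠ x in cocompact (EuclideanSpace ℝ (Fin 3)), v x < v z :=
    hv0.eventually (eventually_lt_nhds hvz)
  obtain ⟨S, hS, hSsub⟩ := mem_cocompact.mp hev
  have hKsub : {x | v z ≤ v x} ⊆ S := by
    intro x hx
    by_contra hxS
    have h2 : v x < v z := hSsub hxS
    have hx' : v z ≤ v x := hx
    linarith
  have hKcomp : IsCompact {x | v z ≤ v x} :=
    hS.of_isClosed_subset (isClosed_le continuous_const hvcont) hKsub
  obtain ⟨x0, hx0K, hx0max⟩ := hKcomp.exists_isMaxOn ⟨z, le_refl (v z)⟩ hvcont.continuousOn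
  have hx0K' : v z ≤ v x0 := hx0K
  have hglobal : ∀ x, v x ≤ v x0 := by
    intro x
    by_cases hx : v z ≤ v x
    · exact hx0max hx
    · push_neg at hx; exact le_trans hx.le hx0K'
  have hvx0 : 0 < v x0 := lt_of_lt_of_le hvz hx0K'
  set r := ‖x0‖ with hrdef
  have hrM : M < r := by
    by_contra hle
    push_neg at hle
    have := hball x0 hle
    simp only [hvdef] at hvx0
    linarith
  have hr0 : 0 < r := lt_trans hM hrM
  have key : ∀ i : Fin 3,
      iteratedFDeriv ℝ 2 w x0 ![EuclideanSpace.single i 1, EuclideanSpace.single i 1]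
        ≤ C * Real.exp (-k*r) * (k^2*(x0 i)^2/r^2 - k*(r^2-(x0 i)^2)/r^3) := by
    intro i
    set b := x0 i with hbdef
    set e : EuclideanSpace ℝ (Fin 3) := EuclideanSpace.single i 1 with hedef
    have hinner : (inner ℝ x0 e : ℝ) = b := by
      simp [hedef, EuclideanSpace.inner_single_right, hbdef]
    have hnorme : ‖e‖ = 1 := by simp [hedef]
    have hnorm : ∀ t : ℝ, ‖x0 + t • e‖ = Real.sqrt (r^2 + 2*b*t + t^2) := by
      intro t
      have h1 : ‖x0 + t • e‖^2 = r^2 + 2*b*t + t^2 := by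
        rw [norm_add_sq_real, real_inner_smul_right, hinner, norm_smul, hnorme]
        simp [Real.norm_eq_abs, mul_pow, sq_abs]
        ring
      rw [← h1, Real.sqrt_sq (norm_nonneg _)]
    have hb2 : b^2 ≤ r^2 := by
      have habs : |(inner ℝ x0 e : ℝ)| ≤ ‖x0‖ * ‖e‖ := abs_real_inner_le_norm x0 e
      rw [hinner, hnorme, mul_one] at habs
      have h1 := abs_nonneg b
      nlinarith [sq_abs b]
    have hmax : IsLocalMax
        (fun t : ℝ => w (x0 + t • e) - C * Real.exp (-k * Real.sqrt (r^2 + 2*b*t + t^2))) 0 := by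
      apply Filter.Eventually.of_forall
      intro t
      show w (x0 + t • e) - C * Real.exp (-k * Real.sqrt (r^2 + 2*b*t + t^2)) ≤
        w (x0 + (0:ℝ) • e) - C * Real.exp (-k * Real.sqrt (r^2 + 2*b*0 + 0^2))
      rw [← hnorm t, ← hnorm 0]
      have h1 := hglobal (x0 + t • e)
      simp only [hvdef] at h1
      simpa using h1
    have hg' : ∀ᶠ t in nhds (0:ℝ), HasDerivAt
        (fun t : ℝ => w (x0 + t • e) - C * Real.exp (-k * Real.sqrt (r^2 + 2*b*t + t^2)))
        (fderiv ℝ w (x0 + t • e) e -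
          (C * Real.exp (-k * Real.sqrt (r^2 + 2*b*t + t^2))) *
            (-k * ((b + t) / Real.sqrt (r^2 + 2*b*t + t^2)))) t := by
      have hmem : Set.Ioo (-r) r ∈ nhds (0:ℝ) := Ioo_mem_nhds (by linarith) hr0
      filter_upwards [hmem] with t ht
      have ht' : |t| < r := abs_lt.mpr ⟨ht.1, ht.2⟩
      exact (line_hasDerivAt w hw x0 e t).sub (phi_hasDerivAt C k r b t (q_pos hr0 hb2 ht'))
    have hg'' := (line_hasDerivAt2 w hw x0 e).sub (phi_hasDerivAt2 C k r b hr0 hb2)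
    have := second_test hmax hg' hg''
    linarith
  have hS : ∑ i : Fin 3, (x0 i)^2 = r^2 := by
    have h := EuclideanSpace.norm_eq x0
    have h2 : r^2 = ∑ i : Fin 3, ‖x0 i‖^2 := by
      rw [hrdef, h, Real.sq_sqrt (Finset.sum_nonneg fun i _ => sq_nonneg _)]
    simpa [Real.norm_eq_abs, sq_abs] using h2.symm
  have hlap1 : laplacian w x0 ≤ C * Real.exp (-k*r) * (k^2 - 2*k/r) := by
    have hsum := Finset.sum_le_sum (fun i (_ : i ∈ Finset.univ) => key i)
    have heq : ∑ i : Fin 3, C * Real.exp (-k*r) * (k^2*(x0 i)^2/r^2 - k*(r^2-(x0 i)^2)/r^3)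
        = C * Real.exp (-k*r) * (k^2 - 2*k/r) := by
      rw [Fin.sum_univ_three]
      rw [Fin.sum_univ_three] at hS
      exact sum3 _ k r _ _ _ (ne_of_gt hr0) hS
    calc laplacian w x0 = ∑ i : Fin 3, iteratedFDeriv ℝ 2 w x0
          ![EuclideanSpace.single i 1, EuclideanSpace.single i 1] := rfl
    _ ≤ ∑ i : Fin 3, C * Real.exp (-k*r) * (k^2*(x0 i)^2/r^2 - k*(r^2-(x0 i)^2)/r^3) := hsum
    _ = _ := heq
  have hlap2 : -laplacian w x0 ≤ (μ/2) * w x0 := hineq x0 (le_of_lt hrM)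
  have hμk : (μ/2) * w x0 = -(k^2 * w x0) := by rw [hk2]; ring
  have hlapge : k^2 * w x0 ≤ laplacian w x0 := by rw [hμk] at hlap2; linarith
  have hwx0 : C * Real.exp (-k * r) < w x0 := by
    simp only [hvdef] at hvx0
    linarith
  have he0 : 0 < Real.exp (-k*r) := Real.exp_pos _
  have hexpand : C * Real.exp (-k*r) * (k^2 - 2*k/r)
      = C * Real.exp (-k*r) * k^2 - 2*k*(C*Real.exp (-k*r))/r := by ring
  have h2 : k^2 * (C * Real.exp (-k*r)) < k^2 * w x0 :=
    mul_lt_mul_of_pos_left hwx0 (pow_pos hk0 2)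
  have h3 : 0 < 2*k*(C*Real.exp (-k*r))/r := by positivity
  rw [hexpand] at hlap1
  nlinarith
end
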